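/- With the single-queue setup where A_n/n → ν, S_n/n → ν a.s. (ν > 0), d_n = s_n·1{Q_n > 0}, queue increments bounded by 1 per slot, and liminf Q_n/n = 0 a.s., it follows that limsup_{n→∞} Q_n/n = 0 almost surely; i.e., the queue is rate stable. -/

import Mathlib

open Filter

private lemma exc_aux (a s Q : ℕ → ℝ)
    (hdyn : ∀ n, Q (n + 1) = Q n + a (n + 1) - s (n + 1) * (if 0 < Q n then 1 else 0)) :
    ∀ m n, m ≤ n → (∀ k, m ≤ k → k < n → 0 < Q k) →
      Q n = Q m + ((∑ k ∈ Finset.range n, a (k + 1)) - ∑ k ∈ Finset.range m, a (k + 1))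
              - ((∑ k ∈ Finset.range n, s (k + 1)) - ∑ k ∈ Finset.range m, s (k + 1)) := by
  intro m n hmn
  induction n, hmn using Nat.le_induction with
  | base => intro _; ring
  | succ n hmn ih =>
    intro hpos
    have h1 : Q (n + 1) = Q n + a (n + 1) - s (n + 1) := by
      have := hdyn n
      rw [if_pos (hpos n hmn (Nat.lt_succ_self n))] at this
      simpa using this
    rw [h1, ih (fun k hk hk' => hpos k hk (hk'.trans (Nat.lt_succ_self n))),
      Finset.sum_range_succ, Finset.sum_range_succ]
    ring

theorem stmt_11 (a s Q : ℕ → ℝ) (ν : ℝ) (hν : 0 < ν)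
    (ha01 : ∀ n, a n = 0 ∨ a n = 1) (hs01 : ∀ n, s n = 0 ∨ s n = 1)
    (hQnn : ∀ n, 0 ≤ Q n)
    (hdyn : ∀ n, Q (n + 1) = Q n + a (n + 1) - s (n + 1) * (if 0 < Q n then 1 else 0))
    (hA : Tendsto (fun n : ℕ => (∑ k ∈ Finset.range n, a (k + 1)) / n) atTop (nhds ν))
    (hS : Tendsto (fun n : ℕ => (∑ k ∈ Finset.range n, s (k + 1)) / n) atTop (nhds ν))
    (hliminf : liminf (fun n : ℕ => Q n / n) atTop = 0) :
    limsup (fun n : ℕ => Q n / n) atTop = 0 := by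
  classical
  have hexc := exc_aux a s Q hdyn
  -- Q n ≤ Q 0 + n
  have hQgrow : ∀ n, Q n ≤ Q 0 + n := by
    intro n
    induction n with
    | zero => simp
    | succ n ih =>
      have ha' : a (n + 1) ≤ 1 := by rcases ha01 (n + 1) with h | h <;> simp [h]
      have hs' : 0 ≤ s (n + 1) := by rcases hs01 (n + 1) with h | h <;> simp [h]
      have hind : (0 : ℝ) ≤ (if 0 < Q n then (1 : ℝ) else 0) := by positivity
      have := hdyn n
      push_cast
      nlinarith [mul_nonneg hs' hind]
  -- coboundedness
  have hcobdd : IsCoboundedUnder (· ≥ ·) atTop (fun n : ℕ => Q n / n) := by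
    apply isCoboundedUnder_ge_of_eventually_le atTop (x := Q 0 + 1)
    filter_upwards [eventually_ge_atTop 1] with n hn
    have hn' : (1 : ℝ) ≤ (n : ℝ) := by exact_mod_cast hn
    have hn0 : (0 : ℝ) < n := by linarith
    rw [div_le_iff₀ hn0]
    have := hQgrow n
    nlinarith [hQnn 0]
  -- main convergence statement
  have key : Tendsto (fun n : ℕ => Q n / n) atTop (nhds 0) := by
    rw [Metric.tendsto_atTop]
    intro ε hε
    set ε' : ℝ := ε / 4 with hε'def
    have hε' : 0 < ε' := by positivity
    -- C-bound: eventually |A' n - S' n| ≤ ε' n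
    have hC : Tendsto (fun n : ℕ =>
        ((∑ k ∈ Finset.range n, a (k + 1)) - ∑ k ∈ Finset.range n, s (k + 1)) / n)
        atTop (nhds 0) := by
      have := hA.sub hS
      rw [sub_self] at this
      refine this.congr fun n => ?_
      rw [sub_div]
    obtain ⟨N₀', hN₀'⟩ := (Metric.tendsto_atTop.mp hC) ε' hε'
    set N₀ : ℕ := max N₀' 1 with hN₀def
    have hCb : ∀ k : ℕ, N₀ ≤ k →
        |(∑ i ∈ Finset.range k, a (i + 1)) - ∑ i ∈ Finset.range k, s (i + 1)| ≤ ε' * k := by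
      intro k hk
      have hk1 : 1 ≤ k := le_trans (le_max_right _ _) hk
      have hk0 : (0 : ℝ) < k := by exact_mod_cast hk1
      have := hN₀' k (le_trans (le_max_left _ _) hk)
      rw [Real.dist_eq, sub_zero, abs_div, abs_of_pos hk0, div_lt_iff₀ hk0] at this
      linarith
    -- pick M ≥ N₀ with Q M < ε' * M
    have hfreq : ∃ᶠ n : ℕ in atTop, Q n / n < ε' := by
      apply frequently_lt_of_liminf_lt hcobdd
      rw [hliminf]; exact hε'
    obtain ⟨M, hMfr, hMN₀⟩ := (hfreq.and_eventually (eventually_ge_atTop N₀)).exists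
    have hM1 : 1 ≤ M := le_trans (le_max_right _ _) hMN₀
    have hM0 : (0 : ℝ) < M := by exact_mod_cast hM1
    have hQM : Q M < ε' * M := by
      rw [div_lt_iff₀ hM0] at hMfr; linarith
    -- N large enough that 1 ≤ ε' * n
    obtain ⟨N₁, hN₁⟩ : ∃ N₁ : ℕ, (1 : ℝ) ≤ ε' * N₁ := by
      refine ⟨⌈1 / ε'⌉₊, ?_⟩
      have h1 : (1 / ε' : ℝ) ≤ (⌈1 / ε'⌉₊ : ℝ) := Nat.le_ceil _
      rw [div_le_iff₀ hε'] at h1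
      linarith
    refine ⟨max M N₁, fun n hn => ?_⟩
    have hnM : M ≤ n := le_trans (le_max_left _ _) hn
    have hnN₁ : N₁ ≤ n := le_trans (le_max_right _ _) hn
    have hn1 : 1 ≤ n := le_trans hM1 hnM
    have hn0 : (0 : ℝ) < n := by exact_mod_cast hn1
    have hone : (1 : ℝ) ≤ ε' * n := by
      refine le_trans hN₁ ?_
      have : (N₁ : ℝ) ≤ n := by exact_mod_cast hnN₁
      nlinarith
    -- main claim: Q n ≤ 3 * ε' * n
    have hmain : Q n ≤ 3 * ε' * n := by
      by_cases hzero : ∃ k, M ≤ k ∧ k ≤ n ∧ Q k = 0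
      · obtain ⟨k₀, hk₀M, hk₀n, hk₀Q⟩ := hzero
        set P : ℕ → Prop := fun k => M ≤ k ∧ Q k = 0 with hPdef
        set τ : ℕ := Nat.findGreatest P n with hτdef
        have hτspec : P τ := Nat.findGreatest_spec hk₀n ⟨hk₀M, hk₀Q⟩
        have hττ : τ ≤ n := Nat.findGreatest_le n
        have hτM : M ≤ τ := hτspec.1
        have hτQ : Q τ = 0 := hτspec.2
        rcases eq_or_lt_of_le hττ with heq | hlt
        · rw [← heq, hτQ]; positivity
        · -- Q (τ+1) = a (τ+1) ≤ 1
          have hQτ1 : Q (τ + 1) ≤ 1 := by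
            have := hdyn τ
            rw [if_neg (by rw [hτQ]; exact lt_irrefl 0)] at this
            rcases ha01 (τ + 1) with h | h <;> simp [h, hτQ] at this <;> simp [this]
          have hpos : ∀ k, τ + 1 ≤ k → k < n → 0 < Q k := by
            intro k hk hk'
            have hnP : ¬ P k := Nat.findGreatest_is_greatest (by omega) (le_of_lt hk')
            have hMk : M ≤ k := by omega
            have : Q k ≠ 0 := fun h => hnP ⟨hMk, h⟩
            exact lt_of_le_of_ne (hQnn k) (Ne.symm this)
          have hid := hexc (τ + 1) n (by omega) hpos
          have hb1 := hCb n (le_trans hMN₀ hnM)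
          have hb2 := hCb (τ + 1) (by omega)
          have hτn : ((τ : ℝ) + 1) ≤ (n : ℝ) := by exact_mod_cast hlt
          have hab1 := abs_le.mp hb1
          have hab2 := abs_le.mp hb2
          push_cast at hb2 hab2 ⊢
          nlinarith [hab1.1, hab1.2, hab2.1, hab2.2]
      · push_neg at hzero
        have hpos : ∀ k, M ≤ k → k < n → 0 < Q k := by
          intro k hk hk'
          have : Q k ≠ 0 := hzero k hk (le_of_lt hk')
          exact lt_of_le_of_ne (hQnn k) (Ne.symm this)
        have hid := hexc M n hnM hpos
        have hb1 := hCb n (le_trans hMN₀ hnM)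
        have hb2 := hCb M hMN₀
        have hMn : (M : ℝ) ≤ n := by exact_mod_cast hnM
        have hab1 := abs_le.mp hb1
        have hab2 := abs_le.mp hb2
        nlinarith [hab1.1, hab1.2, hab2.1, hab2.2]
    rw [Real.dist_eq, sub_zero, abs_of_nonneg (div_nonneg (hQnn n) hn0.le), div_lt_iff₀ hn0]
    have : 3 * ε' * n < ε * n := by
      rw [hε'def]; nlinarith
    linarith
  exact key.limsup_eq
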